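/- For the SU(3) ground partition with charges p_1 > p_2 > p_3, p_1 + p_2 + p_3 = 0, the hook lengths of the boxes factor by bicolour: the (r,s)-boxes (1 ≤ r < s ≤ 3) contribute ∏_{(r,s)-boxes}(q^{-h/2} - q^{h/2})^{-1} = ∏_{k=1}^{p_r - p_s - 1} (q^{-3(p̃_r - p̃_s - k)/2} - q^{3(p̃_r - p̃_s - k)/2})^{-k}, where p̃_r = p_r + (r-2)/3. -/

import Mathlib

/-- The Maya diagram of a partition: the set `{μ_i - i + 1/2 : i ≥ 1} ⊆ ℤ + 1/2`,
realized inside `ℚ` (with the 0-indexed row lengths, `x_i = μ.rowLen i - (i+1) + 1/2`). -/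
def maya (μ : YoungDiagram) : Set ℚ :=
  Set.range fun i : ℕ => (μ.rowLen i : ℚ) - i - 1 / 2

/-- The hook length of the (0-indexed) box `(i, j)` of a Young diagram:
`h(i,j) = μ_i - j + μ'_j - i + 1` in 1-indexed terms. -/
def hookLen (μ : YoungDiagram) (i j : ℕ) : ℕ :=
  μ.rowLen i + μ.colLen j - i - j - 1

/-- `κ(μ) = 2 ∑_{(i,j) ∈ μ} (j - i)`, summed over the boxes of the Young diagram. -/
def kappa (μ : YoungDiagram) : ℤ :=
  2 * ∑ c ∈ μ.cells, ((c.2 : ℤ) - (c.1 : ℤ))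

/-- The Maya diagram of the SU(3) ground partition with charges `p : Fin 3 → ℤ`
(1-indexed charges `p_{r+1} = p r`): `⋃_{r} {3(-i + 1/2 + p̃_r) : i ≥ 1}` with
`p̃_r = p_r + (r - 2)/3` in 1-indexed terms, i.e. `p̃ (r : Fin 3) = p r + (r - 1)/3`. -/
def su3GroundMaya (p : Fin 3 → ℤ) : Set ℚ :=
  ⋃ r : Fin 3, Set.range fun i : ℕ =>
    3 * (-(i : ℚ) - 1 / 2 + ((p r : ℚ) + ((r : ℚ) - 1) / 3))

namespace SU3Aux

/-- Row boundary position. -/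
def rA (μ : YoungDiagram) (i : ℕ) : ℤ := (μ.rowLen i : ℤ) - i

/-- Column boundary position. -/
def cB (μ : YoungDiagram) (j : ℕ) : ℤ := (j : ℤ) + 1 - μ.colLen j

lemma rA_strictAnti (μ : YoungDiagram) : StrictAnti (rA μ) := by
  intro i i' h
  have := μ.rowLen_anti i i' h.le
  unfold rA
  omega

lemma cB_strictMono (μ : YoungDiagram) : StrictMono (cB μ) := by
  intro j j' h
  have := μ.colLen_anti j j' h.le
  unfold cB
  omega

lemma rA_ne_cB (μ : YoungDiagram) (i j : ℕ) : rA μ i ≠ cB μ j := by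
  have h1 : (i, j) ∈ μ ↔ j < μ.rowLen i := YoungDiagram.mem_iff_lt_rowLen
  have h2 : (i, j) ∈ μ ↔ i < μ.colLen j := YoungDiagram.mem_iff_lt_colLen
  unfold rA cB
  by_cases hm : (i, j) ∈ μ
  · have := h1.mp hm; have := h2.mp hm; omega
  · have ha : ¬ j < μ.rowLen i := fun h => hm (h1.mpr h)
    have hb : ¬ i < μ.colLen j := fun h => hm (h2.mpr h)
    omega

lemma mem_of_cB_lt_rA {μ : YoungDiagram} {i j : ℕ} (h : cB μ j < rA μ i) : (i, j) ∈ μ := by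
  by_contra hm
  have h1 : ¬ j < μ.rowLen i := fun h => hm (YoungDiagram.mem_iff_lt_rowLen.mpr h)
  have h2 : ¬ i < μ.colLen j := fun h => hm (YoungDiagram.mem_iff_lt_colLen.mpr h)
  unfold rA cB at h
  omega

lemma hook_eq {μ : YoungDiagram} {i j : ℕ} (h : (i, j) ∈ μ) :
    ((μ.rowLen i + μ.colLen j - i - j - 1 : ℕ) : ℤ) = rA μ i - cB μ j := by
  have h1 := YoungDiagram.mem_iff_lt_rowLen.mp h
  have h2 := YoungDiagram.mem_iff_lt_colLen.mp h
  unfold rA cB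
  omega

lemma rA_low (μ : YoungDiagram) (n : ℤ) (hn : n + (μ.colLen 0 : ℤ) ≤ 0) :
    ∃ i, rA μ i = n := by
  refine ⟨(-n).toNat, ?_⟩
  have hi : ((-n).toNat : ℤ) = -n := Int.toNat_of_nonneg (by omega)
  have hrow : μ.rowLen (-n).toNat = 0 := by
    by_contra h
    have : ((-n).toNat, 0) ∈ μ := YoungDiagram.mem_iff_lt_rowLen.mpr (by omega)
    have := YoungDiagram.mem_iff_lt_colLen.mp this
    omega
  unfold rA
  omega

lemma rA_gap {μ : YoungDiagram} {j : ℕ} {n : ℤ} (h1 : cB μ j < n) (h2 : n < cB μ (j + 1)) :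
    ∃ i, rA μ i = n := by
  refine ⟨((j : ℤ) + 1 - n).toNat, ?_⟩
  unfold cB at h1 h2
  have hi : (((j : ℤ) + 1 - n).toNat : ℤ) = (j : ℤ) + 1 - n := Int.toNat_of_nonneg (by push_cast at h2 ⊢; omega)
  set i := ((j : ℤ) + 1 - n).toNat with hidef
  have hm1 : (i, j) ∈ μ := by
    apply YoungDiagram.mem_iff_lt_colLen.mpr
    push_cast at h2
    omega
  have hm2 : (i, j + 1) ∉ μ := by
    intro hm
    have := YoungDiagram.mem_iff_lt_colLen.mp hm
    push_cast at h2
    omega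
  have hl1 := YoungDiagram.mem_iff_lt_rowLen.mp hm1
  have hl2 : ¬ j + 1 < μ.rowLen i := fun h => hm2 (YoungDiagram.mem_iff_lt_rowLen.mpr h)
  unfold rA
  omega

lemma cB_of_not_rA {μ : YoungDiagram} {n : ℤ} (h : ∀ i, rA μ i ≠ n) :
    ∃ j, cB μ j = n := by
  have h0 : cB μ 0 ≤ n := by
    by_contra hc
    have : n + (μ.colLen 0 : ℤ) ≤ 0 := by unfold cB at hc; push_cast at hc; omega
    obtain ⟨i, hi⟩ := rA_low μ n this
    exact h i hi
  have key : ∀ m : ℕ, ∀ j : ℕ, cB μ j ≤ n → n < cB μ j + m → ∃ j', cB μ j' = n := by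
    intro m
    induction m with
    | zero => intro j hj1 hj2; omega
    | succ m ih =>
      intro j hj1 hj2
      rcases eq_or_lt_of_le hj1 with he | hlt
      · exact ⟨j, he⟩
      · rcases le_or_gt (cB μ (j + 1)) n with hle | hgt
        · have hstep : cB μ j + 1 ≤ cB μ (j + 1) := cB_strictMono μ (Nat.lt_succ_self j)
          exact ih (j + 1) hle (by omega)
        · exact absurd (rA_gap hlt hgt) (by simpa using fun i hi => h i hi)
  refine key (n - cB μ 0 + 1).toNat 0 h0 (by omega)

lemma maya_char {μ : YoungDiagram} {p : Fin 3 → ℤ} (hμ : maya μ = su3GroundMaya p)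
    (n : ℤ) : (∃ i, rA μ i = n) ↔
      ∃ x : Fin 3, n % 3 = (3 * p x + (x : ℤ) - 2) % 3 ∧ n ≤ 3 * p x + (x : ℤ) - 2 := by
  have h := Set.ext_iff.mp hμ ((n : ℚ) - 1 / 2)
  simp only [maya, su3GroundMaya, Set.mem_range, Set.mem_iUnion] at h
  constructor
  · rintro ⟨i, hi⟩
    have hmem : (μ.rowLen i : ℚ) - i - 1 / 2 = (n : ℚ) - 1 / 2 := by
      unfold rA at hi
      have h' := congrArg (fun z : ℤ => (z : ℚ)) hi
      push_cast at h' ⊢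
      linarith
    obtain ⟨x, i', hx⟩ := h.mp ⟨i, hmem⟩
    refine ⟨x, ?_, ?_⟩ <;>
    · have : (3 : ℚ) * (-(i' : ℚ) - 1 / 2 + ((p x : ℚ) + ((x : ℚ) - 1) / 3)) = (n : ℚ) - 1 / 2 := hx
      have h2 : 3 * p x + (x : ℤ) - 2 - 3 * i' = n := by
        have : ((3 * p x + (x : ℤ) - 2 - 3 * i' : ℤ) : ℚ) = (n : ℚ) := by push_cast; linarith
        exact_mod_cast this
      omega
  · rintro ⟨x, hmod, hle⟩
    have hi' : ∃ i' : ℕ, 3 * p x + (x : ℤ) - 2 - 3 * i' = n := by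
      refine ⟨((3 * p x + (x : ℤ) - 2 - n) / 3).toNat, ?_⟩
      omega
    obtain ⟨i', hi'⟩ := hi'
    have hx : (3 : ℚ) * (-(i' : ℚ) - 1 / 2 + ((p x : ℚ) + ((x : ℚ) - 1) / 3)) = (n : ℚ) - 1 / 2 := by
      have : ((3 * p x + (x : ℤ) - 2 - 3 * i' : ℤ) : ℚ) = (n : ℚ) := by exact_mod_cast hi'
      push_cast at this ⊢
      linarith
    obtain ⟨i, hi⟩ := h.mpr ⟨x, i', hx⟩
    refine ⟨i, ?_⟩
    unfold rA
    have : ((μ.rowLen i : ℤ) - i : ℚ) = (n : ℚ) := by push_cast at hi ⊢; linarith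
    exact_mod_cast this

lemma pow_prod_sigma {M : Type*} [CommMonoid M] (K : ℕ) (g : ℕ → M) :
    ∏ x ∈ (Finset.Icc 1 K).sigma (fun k => Finset.Icc 1 k), g x.1
      = ∏ k ∈ Finset.Icc 1 K, g k ^ k := by
  rw [← Finset.prod_sigma' (Finset.Icc 1 K) (fun k => Finset.Icc 1 k) (fun a _ => g a)]
  exact Finset.prod_congr rfl fun k hk => by
    rw [Finset.prod_const, Nat.card_Icc, Nat.add_sub_cancel]

end SU3Aux

theorem su3_ground_bicoloured_hooks (p : Fin 3 → ℤ)
    (h12 : p 1 < p 0) (h23 : p 2 < p 1) (hsum : p 0 + p 1 + p 2 = 0)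
    (μ : YoungDiagram) (hμ : maya μ = su3GroundMaya p)
    (q : ℝ) (hq : q ∈ Set.Ioo (0 : ℝ) 1) (r s : Fin 3) (hrs : r < s) :
    ∏ c ∈ μ.cells.filter (fun c =>
        ((μ.rowLen c.1 : ℤ) - c.1) % 3 = ((r : ℤ) + 1) % 3 ∧
        ((c.2 : ℤ) + 1 - μ.colLen c.2) % 3 = ((s : ℤ) + 1) % 3),
      (q ^ (-(hookLen μ c.1 c.2 : ℝ) / 2) - q ^ ((hookLen μ c.1 c.2 : ℝ) / 2))⁻¹
      = ∏ k ∈ Finset.Icc 1 (p r - p s - 1).toNat,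
          ((q ^ (-(3 : ℝ) * (((p r - p s : ℤ) : ℝ) + ((r : ℝ) - (s : ℝ)) / 3 - k) / 2)
            - q ^ ((3 : ℝ) * (((p r - p s : ℤ) : ℝ) + ((r : ℝ) - (s : ℝ)) / 3 - k) / 2))⁻¹) ^ k := by
  classical
  open SU3Aux in
  have hchar := fun n => SU3Aux.maya_char hμ n
  set T : Fin 3 → ℤ := fun x => 3 * p x + (x : ℤ) - 2 with hT
  have hTrdef : T r = 3 * p r + ((r : ℕ) : ℤ) - 2 := rfl
  have hTsdef : T s = 3 * p s + ((s : ℕ) : ℤ) - 2 := rfl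
  have hrv : (r : ℕ) < 3 := r.isLt
  have hsv : (s : ℕ) < 3 := s.isLt
  have hrs' : (r : ℕ) < (s : ℕ) := hrs
  have hps : p s < p r := by
    fin_cases r <;> fin_cases s <;> simp_all <;> omega
  have hTr3 : ∀ x : Fin 3, T x % 3 = ((x : ℤ) + 1) % 3 := fun x => by simp only [hT]; omega
  have hTinj : ∀ x y : Fin 3, ((x : ℤ) + 1) % 3 = ((y : ℤ) + 1) % 3 → x = y := by
    intro x y hxy
    have hx := x.isLt
    have hy := y.isLt
    exact Fin.ext (by omega)
  set D : ℤ := p r - p s with hD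
  set K : ℕ := (D - 1).toNat with hK
  have hDK : (K : ℤ) = D - 1 := Int.toNat_of_nonneg (by omega)
  -- facts about cells in the filtered set
  have hfacts : ∀ c : ℕ × ℕ, c ∈ μ.cells.filter (fun c =>
        ((μ.rowLen c.1 : ℤ) - c.1) % 3 = ((r : ℤ) + 1) % 3 ∧
        ((c.2 : ℤ) + 1 - μ.colLen c.2) % 3 = ((s : ℤ) + 1) % 3) →
      SU3Aux.cB μ c.2 < SU3Aux.rA μ c.1 ∧ SU3Aux.rA μ c.1 ≤ T r ∧
      (T r - SU3Aux.rA μ c.1) % 3 = 0 ∧ T s < SU3Aux.cB μ c.2 ∧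
      (SU3Aux.cB μ c.2 - T s) % 3 = 0 := by
    rintro ⟨i, j⟩ hc
    simp only [Finset.mem_filter, YoungDiagram.mem_cells] at hc
    obtain ⟨hmem, hrow, hcol⟩ := hc
    have h1 := YoungDiagram.mem_iff_lt_rowLen.mp hmem
    have h2 := YoungDiagram.mem_iff_lt_colLen.mp hmem
    have hXY : SU3Aux.cB μ j < SU3Aux.rA μ i := by unfold SU3Aux.rA SU3Aux.cB; omega
    have hXmod : SU3Aux.rA μ i % 3 = ((r : ℤ) + 1) % 3 := hrow
    have hYmod : SU3Aux.cB μ j % 3 = ((s : ℤ) + 1) % 3 := hcol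
    obtain ⟨x, hx1, hx2⟩ := (hchar (SU3Aux.rA μ i)).mp ⟨i, rfl⟩
    have hx1' : SU3Aux.rA μ i % 3 = T x % 3 := hx1
    have hx2' : SU3Aux.rA μ i ≤ T x := hx2
    have hxr : x = r := hTinj x r (by rw [← hTr3 x, ← hx1', hXmod])
    rw [hxr] at hx1' hx2'
    have hYle : ¬ (SU3Aux.cB μ j ≤ T s) := by
      intro hle
      obtain ⟨i', hi'⟩ := (hchar (SU3Aux.cB μ j)).mpr ⟨s, by rw [hYmod, hTr3 s], hle⟩
      exact SU3Aux.rA_ne_cB μ i' j hi'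
    have h3r := hTr3 r
    have h3s := hTr3 s
    refine ⟨?_, ?_, ?_, ?_, ?_⟩ <;> dsimp only <;> omega
  rw [← SU3Aux.pow_prod_sigma]
  refine Finset.prod_bij (fun c _ =>
      (⟨((T r - T s - (SU3Aux.rA μ c.1 - SU3Aux.cB μ c.2)) / 3).toNat,
        ((SU3Aux.cB μ c.2 - T s) / 3).toNat⟩ : Σ _ : ℕ, ℕ)) ?_ ?_ ?_ ?_
  · -- maps into the sigma set
    intro a ha
    obtain ⟨hXY, hXle, hXmod, hYgt, hYmod⟩ := hfacts a ha
    simp only [Finset.mem_sigma, Finset.mem_Icc]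
    omega
  · -- injectivity
    intro a1 h1 a2 h2 he
    obtain ⟨hXY1, hXle1, hXmod1, hYgt1, hYmod1⟩ := hfacts a1 h1
    obtain ⟨hXY2, hXle2, hXmod2, hYgt2, hYmod2⟩ := hfacts a2 h2
    obtain ⟨hek, hev'⟩ := Sigma.mk.inj_iff.mp he
    have hev := eq_of_heq hev'
    have hY : SU3Aux.cB μ a1.2 = SU3Aux.cB μ a2.2 := by omega
    have hX : SU3Aux.rA μ a1.1 = SU3Aux.rA μ a2.1 := by omega
    exact Prod.ext_iff.mpr ⟨(SU3Aux.rA_strictAnti μ).injective hX,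
      (SU3Aux.cB_strictMono μ).injective hY⟩
  · -- surjectivity
    rintro ⟨k, v⟩ hb
    simp only [Finset.mem_sigma, Finset.mem_Icc] at hb
    obtain ⟨⟨hk1, hk2⟩, hv1, hv2⟩ := hb
    have h3r := hTr3 r
    have h3s := hTr3 s
    obtain ⟨i, hi⟩ := (hchar (T r - 3 * ((k : ℤ) - v))).mpr ⟨r, by omega, by omega⟩
    obtain ⟨j, hj⟩ : ∃ j, SU3Aux.cB μ j = T s + 3 * (v : ℤ) := by
      apply SU3Aux.cB_of_not_rA
      intro i' hi'
      obtain ⟨x, hx1, hx2⟩ := (hchar (T s + 3 * (v : ℤ))).mp ⟨i', hi'⟩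
      have hxs : x = s := hTinj x s (by rw [← hTr3 x, ← hx1]; omega)
      subst hxs
      omega
    have hYX : SU3Aux.cB μ j < SU3Aux.rA μ i := by rw [hi, hj]; omega
    have hmem : (i, j) ∈ μ := SU3Aux.mem_of_cB_lt_rA hYX
    refine ⟨(i, j), ?_, ?_⟩
    · simp only [Finset.mem_filter, YoungDiagram.mem_cells]
      refine ⟨hmem, ?_, ?_⟩
      · show SU3Aux.rA μ i % 3 = ((r : ℤ) + 1) % 3
        rw [hi]; omega
      · show SU3Aux.cB μ j % 3 = ((s : ℤ) + 1) % 3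
        rw [hj]; omega
    · show (⟨((T r - T s - (SU3Aux.rA μ i - SU3Aux.cB μ j)) / 3).toNat,
        ((SU3Aux.cB μ j - T s) / 3).toNat⟩ : Σ _ : ℕ, ℕ) = ⟨k, v⟩
      rw [hi, hj]
      have e1 : ((T r - T s - (T r - 3 * ((k : ℤ) - v) - (T s + 3 * (v : ℤ)))) / 3).toNat = k := by
        omega
      have e2 : ((T s + 3 * (v : ℤ) - T s) / 3).toNat = v := by omega
      rw [e1, e2]
  · -- values agree
    intro a ha
    obtain ⟨hXY, hXle, hXmod, hYgt, hYmod⟩ := hfacts a ha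
    have hmem : (a.1, a.2) ∈ μ := by
      have := (Finset.mem_filter.mp ha).1
      rwa [YoungDiagram.mem_cells, ← Prod.mk.eta (p := a)] at this
    have hZ : (hookLen μ a.1 a.2 : ℤ) = SU3Aux.rA μ a.1 - SU3Aux.cB μ a.2 :=
      SU3Aux.hook_eq hmem
    dsimp only
    set k : ℕ := ((T r - T s - (SU3Aux.rA μ a.1 - SU3Aux.cB μ a.2)) / 3).toNat with hk
    have hkZ : (hookLen μ a.1 a.2 : ℤ)
        = 3 * D + ((r : ℕ) : ℤ) - ((s : ℕ) : ℤ) - 3 * (k : ℤ) := by omega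
    have hcast := congrArg (fun z : ℤ => (z : ℝ)) hkZ
    push_cast at hcast
    have e1 : -(hookLen μ a.1 a.2 : ℝ) / 2
        = -(3 : ℝ) * ((D : ℝ) + ((r : ℝ) - (s : ℝ)) / 3 - (k : ℝ)) / 2 := by
      push_cast
      linarith
    have e2 : (hookLen μ a.1 a.2 : ℝ) / 2
        = (3 : ℝ) * ((D : ℝ) + ((r : ℝ) - (s : ℝ)) / 3 - (k : ℝ)) / 2 := by
      push_cast
      linarith
    rw [e1, e2]
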